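/- Let K < 0 and T > 0 be real numbers, and let b : ℝ → ℝ be continuous on [0,T] with b(0) = 0, b(t) > 0 for every t ∈ (0,T], and b monotone nondecreasing on (0,T]. For t ∈ (0,T] define β(t) = 1 + (2K·e^{2Kt}/b(t)) · ∫₀ᵗ b(s)·e^{−2Ks} ds. Then for every t ∈ (0,T] one has e^{2Kt} ≤ β(t) < 1; in particular 0 < β(t) < 1. -/

import Mathlib

/-- The function `β(t) = 1 + (2K e^{2Kt}/b(t)) ∫₀ᵗ b(s)e^{−2Ks} ds` satisfies
`e^{2Kt} ≤ β(t) < 1`, in particular `0 < β(t) < 1`, on `(0,T]`. -/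
theorem beta_mem_Ioo (K T : ℝ) (hK : K < 0) (hT : 0 < T) (b : ℝ → ℝ)
    (hb : ContinuousOn b (Set.Icc 0 T)) (hb0 : b 0 = 0)
    (hbpos : ∀ t ∈ Set.Ioc (0 : ℝ) T, 0 < b t)
    (hbmono : MonotoneOn b (Set.Ioc (0 : ℝ) T))
    (β : ℝ → ℝ)
    (hβ : ∀ t ∈ Set.Ioc (0 : ℝ) T,
      β t = 1 + (2 * K * Real.exp (2 * K * t) / b t) *
        ∫ s in (0 : ℝ)..t, b s * Real.exp (-2 * K * s)) :
    ∀ t ∈ Set.Ioc (0 : ℝ) T,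
      Real.exp (2 * K * t) ≤ β t ∧ β t < 1 ∧ 0 < β t := by
  intro t ht
  obtain ⟨ht0, htT⟩ := ht
  have hbt : 0 < b t := hbpos t ⟨ht0, htT⟩
  have hsub : Set.Icc (0:ℝ) t ⊆ Set.Icc 0 T := Set.Icc_subset_Icc le_rfl htT
  have hbc : ContinuousOn b (Set.Icc 0 t) := hb.mono hsub
  have hfc : ContinuousOn (fun s => b s * Real.exp (-2 * K * s)) (Set.Icc 0 t) :=
    hbc.mul (Continuous.continuousOn (by continuity))
  have huIcc : Set.uIcc (0:ℝ) t = Set.Icc 0 t := Set.uIcc_of_le ht0.le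
  have hfi : IntervalIntegrable (fun s => b s * Real.exp (-2 * K * s)) MeasureTheory.volume 0 t := by
    apply ContinuousOn.intervalIntegrable
    rwa [huIcc]
  have hgi : IntervalIntegrable (fun s => b t * Real.exp (-2 * K * s)) MeasureTheory.volume 0 t :=
    (Continuous.continuousOn (by continuity)).intervalIntegrable
  -- positivity of the integral
  have hIpos : 0 < ∫ s in (0:ℝ)..t, b s * Real.exp (-2 * K * s) := by
    apply intervalIntegral.intervalIntegral_pos_of_pos_on hfi _ ht0
    intro x hx
    exact mul_pos (hbpos x ⟨hx.1, hx.2.le.trans htT⟩) (Real.exp_pos _)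
  -- pointwise bound
  have hble : ∀ s ∈ Set.Icc (0:ℝ) t, b s * Real.exp (-2 * K * s) ≤ b t * Real.exp (-2 * K * s) := by
    intro s hs
    apply mul_le_mul_of_nonneg_right _ (Real.exp_pos _).le
    rcases eq_or_lt_of_le hs.1 with h | h
    · rw [← h, hb0]; exact hbt.le
    · exact hbmono ⟨h, hs.2.trans htT⟩ ⟨ht0, htT⟩ hs.2
  have hIle : (∫ s in (0:ℝ)..t, b s * Real.exp (-2 * K * s)) ≤
      ∫ s in (0:ℝ)..t, b t * Real.exp (-2 * K * s) :=
    intervalIntegral.integral_mono_on ht0.le hfi hgi hble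
  -- compute the comparison integral
  have hJ : (∫ s in (0:ℝ)..t, Real.exp (-2 * K * s)) =
      (Real.exp (-2 * K * t) - 1) / (-2 * K) := by
    have hc : (-2 : ℝ) * K ≠ 0 := ne_of_gt (by linarith)
    rw [show (fun s : ℝ => Real.exp (-2 * K * s)) = (fun s => Real.exp ((-2 * K) * s)) by
      funext s; ring_nf]
    rw [intervalIntegral.integral_comp_mul_left Real.exp hc]
    simp [integral_exp, smul_eq_mul]
    field_simp
  have hJ' : (∫ s in (0:ℝ)..t, b t * Real.exp (-2 * K * s)) =
      b t * ((Real.exp (-2 * K * t) - 1) / (-2 * K)) := by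
    rw [intervalIntegral.integral_const_mul, hJ]
  rw [hβ t ⟨ht0, htT⟩]
  have hcoef : 2 * K * Real.exp (2 * K * t) / b t < 0 := by
    apply div_neg_of_neg_of_pos _ hbt
    have := Real.exp_pos (2 * K * t)
    nlinarith
  have hexp : Real.exp (2 * K * t) * Real.exp (-2 * K * t) = 1 := by
    rw [← Real.exp_add]; ring_nf; exact Real.exp_zero
  refine ⟨?_, ?_, ?_⟩
  · -- lower bound
    have h1 : (2 * K * Real.exp (2 * K * t) / b t) *
        (∫ s in (0:ℝ)..t, b s * Real.exp (-2 * K * s)) ≥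
        (2 * K * Real.exp (2 * K * t) / b t) *
        (b t * ((Real.exp (-2 * K * t) - 1) / (-2 * K))) := by
      apply mul_le_mul_of_nonpos_left _ hcoef.le
      rw [← hJ']; exact hIle
    have h2 : (2 * K * Real.exp (2 * K * t) / b t) *
        (b t * ((Real.exp (-2 * K * t) - 1) / (-2 * K))) = Real.exp (2 * K * t) - 1 := by
      have hexp' : Real.exp (-(2 * K * t)) = Real.exp (-2 * K * t) := by ring_nf
      field_simp [hbt.ne', hK.ne]
      rw [hexp']
      linear_combination (-1 : ℝ) * hexp
    linarith [h1, h2.symm.le]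
  · nlinarith [mul_neg_of_neg_of_pos hcoef hIpos]
  · have h1 : (2 * K * Real.exp (2 * K * t) / b t) *
        (∫ s in (0:ℝ)..t, b s * Real.exp (-2 * K * s)) ≥
        (2 * K * Real.exp (2 * K * t) / b t) *
        (b t * ((Real.exp (-2 * K * t) - 1) / (-2 * K))) := by
      apply mul_le_mul_of_nonpos_left _ hcoef.le
      rw [← hJ']; exact hIle
    have h2 : (2 * K * Real.exp (2 * K * t) / b t) *
        (b t * ((Real.exp (-2 * K * t) - 1) / (-2 * K))) = Real.exp (2 * K * t) - 1 := by
      have hexp' : Real.exp (-(2 * K * t)) = Real.exp (-2 * K * t) := by ring_nf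
      field_simp [hbt.ne', hK.ne]
      rw [hexp']
      linear_combination (-1 : ℝ) * hexp
    nlinarith [Real.exp_pos (2 * K * t)]
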